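/- Let f_1 and f_2 be positive bumps on [0,1] with orbitals (a_1,b_1) and (a_2,b_2) respectively, and assume a_1 < a_2, b_2 < b_1, and b_2 ≤ f_1(a_2). Then the conjugates g_n = f_1^{-n} f_2 f_1^{n} (n ∈ ℤ) form a basis of a free abelian subgroup of Homeo_+([0,1]): they pairwise commute, and whenever a product ∏_{n} g_n^{k_n} over finitely many integers n with integer exponents k_n equals the identity, all the exponents k_n are zero. -/

import Mathlib

/-- The group of orientation-preserving homeomorphisms of `[0,1]`, modeled as
order-isomorphisms of the unit interval. -/
abbrev Homeo := unitInterval ≃o unitInterval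

/-- `f` is a positive bump with orbital `(a,b)`. -/
def IsPosBump (f : Homeo) (a b : ℝ) : Prop :=
  0 ≤ a ∧ a < b ∧ b ≤ 1 ∧
  (∀ x : unitInterval, (x : ℝ) ≤ (f x : ℝ)) ∧
  (∀ x : unitInterval, f x ≠ x ↔ a < (x : ℝ) ∧ (x : ℝ) < b)

namespace ConjAux

lemma mul_apply (f g : Homeo) (x : unitInterval) : (f * g) x = f (g x) := rfl
lemma one_apply (x : unitInterval) : (1 : Homeo) x = x := rfl

lemma fix_inv {f : Homeo} {x : unitInterval} (h : f x = x) : f⁻¹ x = x := by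
  conv_lhs => rw [← h]
  exact f.symm_apply_apply x

lemma fix_pow {f : Homeo} {x : unitInterval} (h : f x = x) : ∀ j : ℕ, (f ^ j) x = x := by
  intro j
  induction j with
  | zero => rfl
  | succ j ih => rw [pow_succ, mul_apply, h, ih]

lemma fix_zpow {f : Homeo} {x : unitInterval} (h : f x = x) (j : ℤ) : (f ^ j) x = x := by
  obtain ⟨m, rfl | rfl⟩ := j.eq_nat_or_neg
  · rw [zpow_natCast]; exact fix_pow h m
  · rw [zpow_neg, zpow_natCast]; exact fix_inv (fix_pow h m)

lemma le_pow {f : Homeo} (hf : ∀ x, x ≤ f x) (j : ℕ) (x : unitInterval) : x ≤ (f ^ j) x := by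
  induction j generalizing x with
  | zero => exact le_refl x
  | succ j ih => rw [pow_succ, mul_apply]; exact (hf x).trans (ih (f x))

lemma zpow_mono {f : Homeo} (hf : ∀ x, x ≤ f x) {m n : ℤ} (h : m ≤ n) (x : unitInterval) :
    (f ^ m) x ≤ (f ^ n) x := by
  have h1 : f ^ n = f ^ ((n - m).toNat : ℤ) * f ^ m := by
    rw [← zpow_add]; congr 1; omega
  rw [h1, mul_apply, zpow_natCast]
  exact le_pow hf _ _

lemma zpow_cancel (f : Homeo) (j : ℤ) (x : unitInterval) : (f ^ (-j)) ((f ^ j) x) = x := by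
  rw [← mul_apply, ← zpow_add, neg_add_cancel, zpow_zero, one_apply]

/-- The support set of the `n`-th conjugate. -/
def S (f₁ : Homeo) (p q : unitInterval) (n : ℤ) (x : unitInterval) : Prop :=
  p < (f₁ ^ n) x ∧ (f₁ ^ n) x < q

/-- The `n`-th conjugate. -/
def G (f₁ f₂ : Homeo) (n : ℤ) : Homeo := (f₁ ^ n)⁻¹ * f₂ * f₁ ^ n

variable {f₁ f₂ : Homeo} {p q : unitInterval}

lemma G_apply (n : ℤ) (x : unitInterval) :
    G f₁ f₂ n x = (f₁ ^ n).symm (f₂ ((f₁ ^ n) x)) := rfl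

lemma pow_G_apply (n : ℤ) (x : unitInterval) :
    (f₁ ^ n) (G f₁ f₂ n x) = f₂ ((f₁ ^ n) x) := by
  rw [G_apply, OrderIso.apply_symm_apply]

lemma f₂_fix (hf₂supp : ∀ x, f₂ x ≠ x ↔ p < x ∧ x < q)
    {x : unitInterval} (h : ¬(p < x ∧ x < q)) : f₂ x = x := by
  by_contra hne; exact h ((hf₂supp x).mp hne)

lemma f₂_lt (hf₂le : ∀ x, x ≤ f₂ x) (hf₂supp : ∀ x, f₂ x ≠ x ↔ p < x ∧ x < q)
    {x : unitInterval} (h : p < x ∧ x < q) : x < f₂ x :=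
  (hf₂le x).lt_of_ne (Ne.symm ((hf₂supp x).mpr h))

lemma f₂_mem (hf₂le : ∀ x, x ≤ f₂ x) (hf₂supp : ∀ x, f₂ x ≠ x ↔ p < x ∧ x < q)
    {x : unitInterval} (h : p < x ∧ x < q) : p < f₂ x ∧ f₂ x < q := by
  refine ⟨h.1.trans (f₂_lt hf₂le hf₂supp h), ?_⟩
  by_contra hb
  push_neg at hb
  have hq : f₂ q = q := f₂_fix hf₂supp (fun hh => lt_irrefl q hh.2)
  have h2 : f₂ x < f₂ q := f₂.lt_iff_lt.mpr h.2
  rw [hq] at h2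
  exact absurd h2 (not_lt.mpr hb)

lemma G_fix (hf₂supp : ∀ x, f₂ x ≠ x ↔ p < x ∧ x < q)
    {n : ℤ} {x : unitInterval} (h : ¬ S f₁ p q n x) : G f₁ f₂ n x = x := by
  have : f₂ ((f₁ ^ n) x) = (f₁ ^ n) x := f₂_fix hf₂supp h
  rw [G_apply, this, OrderIso.symm_apply_apply]

lemma G_lt (hf₂le : ∀ x, x ≤ f₂ x) (hf₂supp : ∀ x, f₂ x ≠ x ↔ p < x ∧ x < q)
    {n : ℤ} {x : unitInterval} (h : S f₁ p q n x) : x < G f₁ f₂ n x := by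
  have h1 : (f₁ ^ n) x < (f₁ ^ n) (G f₁ f₂ n x) := by
    rw [pow_G_apply]; exact f₂_lt hf₂le hf₂supp h
  exact (f₁ ^ n).lt_iff_lt.mp h1

lemma G_mem (hf₂le : ∀ x, x ≤ f₂ x) (hf₂supp : ∀ x, f₂ x ≠ x ↔ p < x ∧ x < q)
    {n : ℤ} {x : unitInterval} (h : S f₁ p q n x) : S f₁ p q n (G f₁ f₂ n x) := by
  unfold S
  rw [pow_G_apply]
  exact f₂_mem hf₂le hf₂supp h

lemma G_pow_lt (hf₂le : ∀ x, x ≤ f₂ x) (hf₂supp : ∀ x, f₂ x ≠ x ↔ p < x ∧ x < q)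
    {n : ℤ} {x : unitInterval} (h : S f₁ p q n x) :
    ∀ j : ℕ, x < (G f₁ f₂ n ^ (j + 1)) x ∧ S f₁ p q n ((G f₁ f₂ n ^ (j + 1)) x) := by
  intro j
  induction j with
  | zero => rw [pow_one]; exact ⟨G_lt hf₂le hf₂supp h, G_mem hf₂le hf₂supp h⟩
  | succ j ih =>
      rw [pow_succ', mul_apply]
      exact ⟨ih.1.trans (G_lt hf₂le hf₂supp ih.2), G_mem hf₂le hf₂supp ih.2⟩

lemma G_zpow_mem (hf₂le : ∀ x, x ≤ f₂ x) (hf₂supp : ∀ x, f₂ x ≠ x ↔ p < x ∧ x < q)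
    {n : ℤ} {x : unitInterval} (h : S f₁ p q n x) (j : ℤ) :
    S f₁ p q n ((G f₁ f₂ n ^ j) x) := by
  by_contra hb
  have h1 : (G f₁ f₂ n ^ (-j)) ((G f₁ f₂ n ^ j) x) = (G f₁ f₂ n ^ j) x :=
    fix_zpow (G_fix hf₂supp hb) (-j)
  rw [zpow_cancel] at h1
  exact hb (h1 ▸ h)

lemma G_zpow_ne (hf₂le : ∀ x, x ≤ f₂ x) (hf₂supp : ∀ x, f₂ x ≠ x ↔ p < x ∧ x < q)
    {n : ℤ} {x : unitInterval} (h : S f₁ p q n x) {j : ℤ} (hj : j ≠ 0) :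
    (G f₁ f₂ n ^ j) x ≠ x := by
  have key : ∀ i : ℤ, 0 < i → (G f₁ f₂ n ^ i) x ≠ x := by
    intro i hi
    obtain ⟨m, hm⟩ : ∃ m : ℕ, i = (m : ℤ) + 1 := ⟨(i - 1).toNat, by omega⟩
    rw [hm, ← Nat.cast_one, ← Nat.cast_add, zpow_natCast]
    exact ne_of_gt (G_pow_lt hf₂le hf₂supp h m).1
  rcases lt_trichotomy j 0 with hj' | hj' | hj'
  · intro he
    have h1 : (G f₁ f₂ n ^ (-j)) ((G f₁ f₂ n ^ j) x) = (G f₁ f₂ n ^ (-j)) x := by rw [he]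
    rw [zpow_cancel] at h1
    exact key (-j) (by omega) h1.symm
  · exact absurd hj' hj
  · exact key j hj'

lemma S_disj (hf₁le : ∀ x, x ≤ f₁ x) (hstep : q ≤ f₁ p)
    {m n : ℤ} (hmn : m < n) {x : unitInterval} (hm : S f₁ p q m x) :
    ¬ S f₁ p q n x := by
  have h1 : (f₁ ^ (m + 1)) x = f₁ ((f₁ ^ m) x) := by
    rw [add_comm, zpow_add, zpow_one, mul_apply]
  have h2 : q ≤ (f₁ ^ (m + 1)) x := by
    rw [h1]
    exact hstep.trans (f₁.le_iff_le.mpr hm.1.le)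
  have h3 : (f₁ ^ (m + 1)) x ≤ (f₁ ^ n) x := zpow_mono hf₁le (by omega) x
  intro hn
  exact absurd hn.2 (not_lt.mpr (h2.trans h3))

lemma S_disj' (hf₁le : ∀ x, x ≤ f₁ x) (hstep : q ≤ f₁ p)
    {m n : ℤ} (hmn : m ≠ n) {x : unitInterval} (hn : S f₁ p q n x) :
    ¬ S f₁ p q m x := by
  rcases hmn.lt_or_gt with h | h
  · intro hm; exact S_disj hf₁le hstep h hm hn
  · exact S_disj hf₁le hstep h hn

lemma G_commute (hf₂le : ∀ x, x ≤ f₂ x) (hf₂supp : ∀ x, f₂ x ≠ x ↔ p < x ∧ x < q)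
    (hf₁le : ∀ x, x ≤ f₁ x) (hstep : q ≤ f₁ p)
    {m n : ℤ} (hmn : m ≠ n) : Commute (G f₁ f₂ m) (G f₁ f₂ n) := by
  show G f₁ f₂ m * G f₁ f₂ n = G f₁ f₂ n * G f₁ f₂ m
  ext x
  rw [mul_apply, mul_apply]
  by_cases hm : S f₁ p q m x
  · have hn : ¬ S f₁ p q n x := S_disj' hf₁le hstep (Ne.symm hmn) hm
    have hn' : ¬ S f₁ p q n (G f₁ f₂ m x) :=
      S_disj' hf₁le hstep (Ne.symm hmn) (G_mem hf₂le hf₂supp hm)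
    rw [G_fix hf₂supp hn, G_fix hf₂supp hn']
  · by_cases hn : S f₁ p q n x
    · have hm' : ¬ S f₁ p q m (G f₁ f₂ n x) :=
        S_disj' hf₁le hstep hmn (G_mem hf₂le hf₂supp hn)
      rw [G_fix hf₂supp hm, G_fix hf₂supp hm']
    · simp only [G_fix hf₂supp hm, G_fix hf₂supp hn]

lemma prod_fix (hf₂supp : ∀ x, f₂ x ≠ x ↔ p < x ∧ x < q)
    (hf₁le : ∀ x, x ≤ f₁ x) (hstep : q ≤ f₁ p)
    (k : ℤ → ℤ) (n : ℤ) {x : unitInterval} (hx : S f₁ p q n x) :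
    ∀ l : List ℤ, (∀ m ∈ l, m ≠ n) → (l.map fun m => G f₁ f₂ m ^ k m).prod x = x := by
  intro l
  induction l with
  | nil => intro _; rfl
  | cons m t ih =>
      intro hl
      rw [List.map_cons, List.prod_cons, mul_apply,
        ih (fun m' hm' => hl m' (List.mem_cons_of_mem m hm'))]
      have hm : ¬ S f₁ p q m x := S_disj' hf₁le hstep (hl m List.mem_cons_self) hx
      exact fix_zpow (G_fix hf₂supp hm) (k m)

lemma prod_eval (hf₂le : ∀ x, x ≤ f₂ x) (hf₂supp : ∀ x, f₂ x ≠ x ↔ p < x ∧ x < q)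
    (hf₁le : ∀ x, x ≤ f₁ x) (hstep : q ≤ f₁ p)
    (k : ℤ → ℤ) (n : ℤ) {x : unitInterval} (hx : S f₁ p q n x) :
    ∀ l : List ℤ, l.Nodup → n ∈ l →
      (l.map fun m => G f₁ f₂ m ^ k m).prod x = (G f₁ f₂ n ^ k n) x := by
  intro l
  induction l with
  | nil => intro _ h; exact absurd h List.not_mem_nil
  | cons m t ih =>
      intro hnd hmem
      rw [List.nodup_cons] at hnd
      rw [List.map_cons, List.prod_cons, mul_apply]
      by_cases hm : m = n
      · subst hm
        rw [prod_fix hf₂supp hf₁le hstep k m hx t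
          (fun m' hm' => fun he => hnd.1 (he ▸ hm'))]
      · have hnt : n ∈ t := by
          rcases List.mem_cons.mp hmem with h | h
          · exact absurd h.symm hm
          · exact h
        rw [ih hnd.2 hnt]
        have hy : S f₁ p q n ((G f₁ f₂ n ^ k n) x) := G_zpow_mem hf₂le hf₂supp hx (k n)
        have hm' : ¬ S f₁ p q m ((G f₁ f₂ n ^ k n) x) := S_disj' hf₁le hstep hm hy
        exact fix_zpow (G_fix hf₂supp hm') (k m)

end ConjAux

open ConjAux

/-- If the orbital of `f₂` lies inside a fundamental domain of `f₁`, then the conjugates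
`g n = f₁⁻ⁿ f₂ f₁ⁿ` (for `n ∈ ℤ`) form a basis of a free abelian subgroup: they pairwise
commute, and any product `∏ₙ (g n) ^ (k n)` over finitely many `n` (with integer exponents
`k n`, taken here in increasing order of `n`, which is immaterial since the factors commute)
that equals the identity has all exponents zero. -/
theorem conjugates_free_abelian_basis
    (f₁ f₂ : Homeo) (a₁ b₁ a₂ b₂ : ℝ)
    (hf₁ : IsPosBump f₁ a₁ b₁) (hf₂ : IsPosBump f₂ a₂ b₂)
    (h₁ : a₁ < a₂) (h₂ : b₂ < b₁)
    (h₃ : ∀ x : unitInterval, (x : ℝ) = a₂ → b₂ ≤ (f₁ x : ℝ))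
    (g : ℤ → Homeo) (hgdef : ∀ n : ℤ, g n = (f₁ ^ n)⁻¹ * f₂ * f₁ ^ n) :
    (∀ m n : ℤ, Commute (g m) (g n)) ∧
      ∀ k : ℤ →₀ ℤ,
        ((k.support.sort (· ≤ ·)).map (fun n => g n ^ (k n))).prod = 1 → k = 0 := by
  obtain ⟨ha₂0, hab, hb₂1, hf₂le₀, hf₂supp₀⟩ := hf₂
  set p : unitInterval := ⟨a₂, ha₂0, hab.le.trans hb₂1⟩ with hp
  set q : unitInterval := ⟨b₂, ha₂0.trans hab.le, hb₂1⟩ with hq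
  have hf₂le : ∀ x, x ≤ f₂ x := fun x => Subtype.coe_le_coe.mp (hf₂le₀ x)
  have hf₂supp : ∀ x : unitInterval, f₂ x ≠ x ↔ p < x ∧ x < q := by
    intro x
    rw [hf₂supp₀ x]
    constructor
    · rintro ⟨h1, h2⟩
      exact ⟨Subtype.coe_lt_coe.mp h1, Subtype.coe_lt_coe.mp h2⟩
    · rintro ⟨h1, h2⟩
      exact ⟨Subtype.coe_lt_coe.mpr h1, Subtype.coe_lt_coe.mpr h2⟩
  have hf₁le : ∀ x, x ≤ f₁ x := fun x => Subtype.coe_le_coe.mp (hf₁.2.2.2.1 x)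
  have hstep : q ≤ f₁ p := Subtype.coe_le_coe.mp (h₃ p rfl)
  have hG : ∀ n : ℤ, g n = G f₁ f₂ n := fun n => hgdef n
  constructor
  · intro m n
    by_cases hmn : m = n
    · subst hmn; exact Commute.refl _
    · rw [hG m, hG n]
      exact G_commute hf₂le hf₂supp hf₁le hstep hmn
  · intro k hk
    ext n
    by_cases hn : k n = 0
    · simpa using hn
    · exfalso
      have hc0 : (0 : ℝ) ≤ (a₂ + b₂) / 2 := by linarith
      have hc1 : (a₂ + b₂) / 2 ≤ 1 := by linarith
      set pc : unitInterval := ⟨(a₂ + b₂) / 2, hc0, hc1⟩ with hpc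
      set x : unitInterval := (f₁ ^ n).symm pc with hx
      have hpcp : p < pc := Subtype.coe_lt_coe.mp (show a₂ < (a₂ + b₂) / 2 by linarith)
      have hpcq : pc < q := Subtype.coe_lt_coe.mp (show (a₂ + b₂) / 2 < b₂ by linarith)
      have hxS : ConjAux.S f₁ p q n x := by
        constructor
        · rw [hx, OrderIso.apply_symm_apply]; exact hpcp
        · rw [hx, OrderIso.apply_symm_apply]; exact hpcq
      have hmem : n ∈ k.support.sort (· ≤ ·) :=
        (Finset.mem_sort _).mpr (Finsupp.mem_support_iff.mpr hn)
      have hnd : (k.support.sort (· ≤ ·)).Nodup := Finset.sort_nodup _ _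
      have heq : ((k.support.sort (· ≤ ·)).map (fun m => G f₁ f₂ m ^ k m)).prod x
          = (G f₁ f₂ n ^ k n) x :=
        prod_eval hf₂le hf₂supp hf₁le hstep (fun m => k m) n hxS _ hnd hmem
      have hmaps : (fun m : ℤ => g m ^ k m) = fun m => G f₁ f₂ m ^ k m := by
        funext m; rw [hG m]
      rw [hmaps] at hk
      rw [hk, one_apply] at heq
      exact G_zpow_ne hf₂le hf₂supp hxS hn heq.symm
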